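/- Let $\mu_k, \nu_k, \mu, \nu \in \mathcal{P}_1(\mathbb{R})$ with $\mu_k\to\mu$, $\nu_k\to\nu$ in $\mathcal{W}_1$, and let $\pi_k \in \Pi_M(\mu_k,\nu_k)$ converge weakly to $\pi \in \mathcal{P}(\mathbb{R}^2)$. Then $\pi \in \Pi_M(\mu,\nu)$, i.e., the martingale property passes to the limit: $\int y\,\pi_x(dy) = x$ for $\mu$-a.e. $x$. -/

import Mathlib

open MeasureTheory Filter Topology ProbabilityTheory Metric
open scoped NNReal ENNReal ContDiff

noncomputable section

/-- A coupling of `μ` and `ν`: a measure on the product with the given marginals. -/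
def IsCoupling {X Y : Type*} [MeasurableSpace X] [MeasurableSpace Y]
    (π : Measure (X × Y)) (μ : Measure X) (ν : Measure Y) : Prop :=
  π.map Prod.fst = μ ∧ π.map Prod.snd = ν

/-- `WrPow r p q` is the `r`-th power of the `r`-Wasserstein distance:
`inf { ∫ d(y₁,y₂)^r dπ : π coupling of p, q }`. -/
noncomputable def WrPow {Y : Type*} [MeasurableSpace Y] [PseudoMetricSpace Y]
    (r : ℝ) (p q : Measure Y) : ℝ :=
  sInf {v | ∃ π : Measure (Y × Y), IsCoupling π p q ∧ v = ∫ z, dist z.1 z.2 ^ r ∂π}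

/-- Convergence in the `r`-Wasserstein metric. -/
def TendstoWr {Y : Type*} [MeasurableSpace Y] [PseudoMetricSpace Y]
    (r : ℝ) (pk : ℕ → Measure Y) (p : Measure Y) : Prop :=
  Tendsto (fun k => WrPow r (pk k) p) atTop (nhds 0)

/-- Finite `r`-th moment. -/
def FiniteMomentR {Y : Type*} [MeasurableSpace Y] [PseudoMetricSpace Y]
    (r : ℝ) (p : Measure Y) : Prop :=
  ∃ y0 : Y, Integrable (fun y => dist y y0 ^ r) p

/-- Membership in `𝒫_r(Y)`: a probability measure with finite `r`-th moment. -/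
def MemPr {Y : Type*} [MeasurableSpace Y] [PseudoMetricSpace Y]
    (r : ℝ) (p : Measure Y) : Prop :=
  IsProbabilityMeasure p ∧ FiniteMomentR r p

/-- A martingale coupling of `μ` and `ν` on `ℝ`, encoded by a measurable Markov
disintegration kernel whose barycenter is the identity `μ`-a.s. -/
def IsMartCoupling (μ ν : Measure ℝ) (π : Measure (ℝ × ℝ)) : Prop :=
  ∃ κ : ℝ → Measure ℝ, Measurable κ ∧ (∀ x, IsProbabilityMeasure (κ x)) ∧
    π = μ.bind (fun x => (κ x).map (fun y => (x, y))) ∧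
    π.map Prod.snd = ν ∧ (∀ᵐ x ∂μ, ∫ y, y ∂(κ x) = x)

/-! ### Auxiliary lemmas -/

lemma compProd_eq_bind (μ : Measure ℝ) [SFinite μ] (K : Kernel ℝ ℝ) [IsSFiniteKernel K] :
    μ ⊗ₘ K = μ.bind (fun x => (K x).map (fun y => (x, y))) := by
  have hmeas : Measurable (fun x => (K x).map (fun y => (x, y))) := by
    apply Measure.measurable_of_measurable_coe
    intro s hs
    simp_rw [Measure.map_apply measurable_prodMk_left hs]
    exact Kernel.measurable_kernel_prodMk_left hs
  ext s hs
  rw [Measure.compProd_apply hs, Measure.bind_apply hs hmeas.aemeasurable]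
  congr 1
  ext x
  rw [Measure.map_apply measurable_prodMk_left hs]

lemma integrable_abs_of_memPr {p : Measure ℝ} (hp : MemPr 1 p) :
    Integrable (fun x => |x|) p := by
  obtain ⟨hprob, y0, hint⟩ := hp
  simp only [Real.rpow_one, Real.dist_eq, pow_one] at hint
  have : Integrable (fun x => |x - y0| + |y0|) p := hint.add (integrable_const _)
  refine this.mono' measurable_abs.aestronglyMeasurable ?_
  filter_upwards with x
  rw [Real.norm_eq_abs, abs_abs]
  calc |x| = |(x - y0) + y0| := by ring_nf
  _ ≤ |x - y0| + |y0| := abs_add_le _ _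

lemma integrable_of_lipschitz {p : Measure ℝ} [IsProbabilityMeasure p]
    (habs : Integrable (fun x => |x|) p) {L : ℝ≥0} {f : ℝ → ℝ} (hf : LipschitzWith L f) :
    Integrable f p := by
  have : Integrable (fun x => |f 0| + L * |x|) p :=
    (integrable_const _).add (habs.const_mul _)
  refine this.mono' hf.continuous.aestronglyMeasurable ?_
  filter_upwards with x
  rw [Real.norm_eq_abs]
  have := hf.dist_le_mul x 0
  simp only [Real.dist_eq, sub_zero] at this
  calc |f x| = |(f x - f 0) + f 0| := by ring_nf
  _ ≤ |f x - f 0| + |f 0| := abs_add_le _ _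
  _ ≤ L * |x| + |f 0| := by linarith
  _ = |f 0| + L * |x| := by ring

lemma coupling_set_nonempty {p q : Measure ℝ} [IsProbabilityMeasure p] [IsProbabilityMeasure q] :
    {v | ∃ π : Measure (ℝ × ℝ), IsCoupling π p q ∧ v = ∫ z, dist z.1 z.2 ^ (1:ℝ) ∂π}.Nonempty := by
  refine ⟨_, p.prod q, ⟨?_, ?_⟩, rfl⟩
  · rw [Measure.map_fst_prod]; simp
  · rw [Measure.map_snd_prod]; simp

lemma abs_integral_sub_le_W1 {p q : Measure ℝ} (hp : MemPr 1 p) (hq : MemPr 1 q)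
    {L : ℝ≥0} {f : ℝ → ℝ} (hf : LipschitzWith L f) :
    |∫ x, f x ∂p - ∫ x, f x ∂q| ≤ L * WrPow 1 p q := by
  haveI := hp.1; haveI := hq.1
  have habsp := integrable_abs_of_memPr hp
  have habsq := integrable_abs_of_memPr hq
  have hfp : Integrable f p := integrable_of_lipschitz habsp hf
  have hfq : Integrable f q := integrable_of_lipschitz habsq hf
  refine le_of_forall_pos_le_add (fun ε hε => ?_)
  have hδ : (0:ℝ) < ε / (L + 1) := by positivity
  obtain ⟨v, ⟨γ, ⟨hγ1, hγ2⟩, hv⟩, hvlt⟩ :=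
    exists_lt_of_csInf_lt (coupling_set_nonempty (p := p) (q := q))
      (show WrPow 1 p q < WrPow 1 p q + ε / (L + 1) by linarith)
  have habs1 : Integrable (fun z : ℝ × ℝ => |z.1|) γ := by
    rw [← hγ1] at habsp
    exact (integrable_map_measure measurable_abs.aestronglyMeasurable
      measurable_fst.aemeasurable).mp habsp
  have habs2 : Integrable (fun z : ℝ × ℝ => |z.2|) γ := by
    rw [← hγ2] at habsq
    exact (integrable_map_measure measurable_abs.aestronglyMeasurable
      measurable_snd.aemeasurable).mp habsq
  have hdist : Integrable (fun z : ℝ × ℝ => dist z.1 z.2) γ := by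
    refine (habs1.add habs2).mono'
      (continuous_fst.dist continuous_snd).aestronglyMeasurable ?_
    filter_upwards with z
    simp only [Real.norm_eq_abs, Pi.add_apply, abs_dist, Real.dist_eq]
    rw [abs_abs]
    exact abs_sub z.1 z.2
  have hf1 : Integrable (fun z : ℝ × ℝ => f z.1) γ := by
    rw [← hγ1] at hfp
    exact (integrable_map_measure hf.continuous.aestronglyMeasurable
      measurable_fst.aemeasurable).mp hfp
  have hf2 : Integrable (fun z : ℝ × ℝ => f z.2) γ := by
    rw [← hγ2] at hfq
    exact (integrable_map_measure hf.continuous.aestronglyMeasurable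
      measurable_snd.aemeasurable).mp hfq
  have hip : ∫ x, f x ∂p = ∫ z : ℝ × ℝ, f z.1 ∂γ := by
    rw [← hγ1]
    exact integral_map measurable_fst.aemeasurable hf.continuous.aestronglyMeasurable
  have hiq : ∫ x, f x ∂q = ∫ z : ℝ × ℝ, f z.2 ∂γ := by
    rw [← hγ2]
    exact integral_map measurable_snd.aemeasurable hf.continuous.aestronglyMeasurable
  have key : |∫ x, f x ∂p - ∫ x, f x ∂q| ≤ L * v := by
    rw [hip, hiq, ← integral_sub hf1 hf2]
    have step1 : |∫ z : ℝ × ℝ, (f z.1 - f z.2) ∂γ| ≤ ∫ z : ℝ × ℝ, |f z.1 - f z.2| ∂γ := by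
      simpa [Real.norm_eq_abs] using
        norm_integral_le_integral_norm (μ := γ) (fun z : ℝ × ℝ => f z.1 - f z.2)
    have step2 : ∫ z : ℝ × ℝ, |f z.1 - f z.2| ∂γ ≤ ∫ z : ℝ × ℝ, (L : ℝ) * dist z.1 z.2 ∂γ := by
      refine integral_mono (hf1.sub hf2).abs (hdist.const_mul _) (fun z => ?_)
      have := hf.dist_le_mul z.1 z.2
      rwa [Real.dist_eq] at this
    have step3 : ∫ z : ℝ × ℝ, (L : ℝ) * dist z.1 z.2 ∂γ = L * v := by
      rw [integral_const_mul, hv]; simp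
    linarith
  have hvle : v ≤ WrPow 1 p q + ε / (L + 1) := le_of_lt hvlt
  have h1 : (L:ℝ) * v ≤ L * (WrPow 1 p q + ε / (L + 1)) :=
    mul_le_mul_of_nonneg_left hvle L.coe_nonneg
  have h2 : (L:ℝ) * (ε / (L + 1)) ≤ ε := by
    have hL1 : (0:ℝ) < L + 1 := by positivity
    calc (L:ℝ) * (ε / (L+1)) = ε * (L / (L+1)) := by ring
    _ ≤ ε * 1 := by
        refine mul_le_mul_of_nonneg_left ?_ (le_of_lt hε)
        rw [div_le_one hL1]; linarith
    _ = ε := mul_one ε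
  nlinarith

lemma ext_of_lipschitz_tests {p q : Measure ℝ} [IsProbabilityMeasure p] [IsProbabilityMeasure q]
    (h : ∀ (L : ℝ≥0) (f : ℝ → ℝ), LipschitzWith L f → (∀ x, f x ∈ Set.Icc (0:ℝ) 1) →
      ∫ x, f x ∂p = ∫ x, f x ∂q) : p = q := by
  refine MeasureTheory.ext_of_generate_finite {s : Set ℝ | IsClosed s}
    (by rw [BorelSpace.measurable_eq (α := ℝ), borel_eq_generateFrom_isClosed])
    isPiSystem_isClosed (fun F hF => ?_) (by simp)
  rcases Set.eq_empty_or_nonempty F with rfl | hFne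
  · simp
  set f : ℕ → ℝ → ℝ := fun n x => max (1 - n * infDist x F) 0 with hf
  have hlip : ∀ n : ℕ, LipschitzWith n (f n) := by
    intro n
    rw [lipschitzWith_iff_dist_le_mul]
    intro x y
    have h1 : dist (f n x) (f n y) ≤ dist (1 - n * infDist x F) (1 - n * infDist y F) := by
      simp only [Real.dist_eq, hf]
      exact abs_max_sub_max_le_abs _ _ _
    have h2 : dist (1 - (n:ℝ) * infDist x F) (1 - n * infDist y F)
        = n * dist (infDist x F) (infDist y F) := by
      simp only [Real.dist_eq]
      rw [show (1 - (n:ℝ) * infDist x F) - (1 - n * infDist y F)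
        = n * (infDist y F - infDist x F) by ring, abs_mul, Nat.abs_cast, abs_sub_comm]
    have h3 : dist (infDist x F) (infDist y F) ≤ dist x y := by
      simpa using (lipschitz_infDist_pt F).dist_le_mul x y
    calc dist (f n x) (f n y) ≤ (n:ℝ) * dist (infDist x F) (infDist y F) := by rw [← h2]; exact h1
    _ ≤ n * dist x y := by
        refine mul_le_mul_of_nonneg_left h3 (by positivity)
    _ = (n : ℝ≥0) * dist x y := by norm_cast
  have hmem : ∀ n x, f n x ∈ Set.Icc (0:ℝ) 1 := by
    intro n x
    constructor
    · exact le_max_right _ _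
    · apply max_le _ zero_le_one
      have : (0:ℝ) ≤ n * infDist x F := mul_nonneg (Nat.cast_nonneg n) infDist_nonneg
      linarith
  have hlim : ∀ x, Tendsto (fun n => f n x) atTop (𝓝 (F.indicator (fun _ => (1:ℝ)) x)) := by
    intro x
    by_cases hx : x ∈ F
    · have : ∀ n, f n x = 1 := by
        intro n
        simp [hf, infDist_zero_of_mem hx]
      simp only [this, Set.indicator_of_mem hx]
      exact tendsto_const_nhds
    · rw [Set.indicator_of_notMem hx]
      have hd : 0 < infDist x F := (hF.notMem_iff_infDist_pos hFne).mp hx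
      have : ∀ᶠ n : ℕ in atTop, f n x = 0 := by
        filter_upwards [eventually_ge_atTop ⌈1 / infDist x F⌉₊] with n hn
        have h1 : 1 / infDist x F ≤ n := le_trans (Nat.le_ceil _) (by exact_mod_cast hn)
        have h2 : 1 ≤ n * infDist x F := by
          rw [div_le_iff₀ hd] at h1; linarith
        simp only [hf, max_eq_right_iff]
        linarith
      exact Tendsto.congr' (by filter_upwards [this] with n hn using hn.symm) tendsto_const_nhds
  have hint : ∀ (m : Measure ℝ), IsProbabilityMeasure m →
      Tendsto (fun n => ∫ x, f n x ∂m) atTop (𝓝 ((m F).toReal)) := by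
    intro m hm
    rw [← measureReal_def, ← integral_indicator_one hF.measurableSet]
    refine tendsto_integral_of_dominated_convergence (fun _ => (1:ℝ))
      (fun n => ((hlip n).continuous).aestronglyMeasurable) (integrable_const _) ?_ ?_
    · intro n
      filter_upwards with x
      rw [Real.norm_eq_abs, abs_of_nonneg (hmem n x).1]
      exact (hmem n x).2
    · filter_upwards with x using hlim x
  have h1 := hint p inferInstance
  have h2 := hint q inferInstance
  have heq : (fun n => ∫ x, f n x ∂p) = (fun n => ∫ x, f n x ∂q) := by
    funext n; exact h (n : ℝ≥0) (f n) (hlip n) (hmem n)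
  rw [heq] at h1
  have := tendsto_nhds_unique h1 h2
  exact ENNReal.toReal_eq_toReal_iff' (measure_ne_top p F) (measure_ne_top q F) |>.mp this

/-! ### Truncation machinery -/

noncomputable def clampR (R t : ℝ) : ℝ := max (min t R) (-R)
noncomputable def excess (R t : ℝ) : ℝ := max (|t| - R) 0

lemma excess_nonneg (R t : ℝ) : 0 ≤ excess R t := le_max_right _ _

lemma excess_le_abs {R : ℝ} (hR : 0 ≤ R) (t : ℝ) : excess R t ≤ |t| :=
  max_le (by linarith [abs_nonneg t]) (abs_nonneg t)

lemma continuous_clampR (R : ℝ) : Continuous (clampR R) :=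
  ((continuous_id.min continuous_const).max continuous_const)

lemma abs_clampR_le {R : ℝ} (hR : 0 ≤ R) (t : ℝ) : |clampR R t| ≤ R := by
  rw [abs_le, clampR]
  constructor
  · exact le_max_right _ _
  · exact max_le (min_le_right _ _) (by linarith)

lemma abs_sub_clampR {R : ℝ} (hR : 0 ≤ R) (t : ℝ) : |t - clampR R t| ≤ excess R t := by
  rcases le_or_gt t R with h1 | h1
  · rcases le_or_gt (-R) t with h2 | h2
    · have hc : clampR R t = t := by rw [clampR, min_eq_left h1, max_eq_left h2]
      simp [hc, excess_nonneg]
    · have hc : clampR R t = -R := by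
        rw [clampR, max_eq_right]
        exact le_trans (min_le_left _ _) (le_of_lt h2)
      rw [hc, excess]
      have ht : t + R ≤ 0 := by linarith
      have h3 : |t - -R| = -t - R := by rw [abs_of_nonpos (by linarith)]; ring
      have h4 : -t ≤ |t| := neg_le_abs t
      have h5 : |t| - R ≤ max (|t| - R) 0 := le_max_left _ _
      linarith
  · have hc : clampR R t = R := by
      rw [clampR, min_eq_right (le_of_lt h1), max_eq_left (by linarith)]
    rw [hc, excess]
    have h3 : |t - R| = t - R := abs_of_nonneg (by linarith)
    have h4 : t ≤ |t| := le_abs_self t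
    have h5 : |t| - R ≤ max (|t| - R) 0 := le_max_left _ _
    linarith

lemma excess_sub_le (R x y : ℝ) : excess R (y - x) ≤ excess (R/2) x + excess (R/2) y := by
  have h1 : |y - x| ≤ |x| + |y| := by
    calc |y - x| ≤ |y| + |x| := abs_sub _ _
    _ = |x| + |y| := by ring
  refine max_le ?_ (add_nonneg (excess_nonneg _ _) (excess_nonneg _ _))
  calc |y - x| - R ≤ (|x| - R/2) + (|y| - R/2) := by linarith
  _ ≤ excess (R/2) x + excess (R/2) y := add_le_add (le_max_left _ _) (le_max_left _ _)

lemma lipschitz_excess (R : ℝ) : LipschitzWith 1 (excess R) := by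
  rw [lipschitzWith_iff_dist_le_mul]
  intro x y
  simp only [NNReal.coe_one, one_mul, excess, Real.dist_eq]
  calc |max (|x| - R) 0 - max (|y| - R) 0| ≤ |(|x| - R) - (|y| - R)| :=
    abs_max_sub_max_le_abs _ _ _
  _ = |(|x| - |y|)| := by congr 1; ring
  _ ≤ |x - y| := abs_abs_sub_abs_le_abs_sub _ _

lemma integrable_excess {p : Measure ℝ} (hp : MemPr 1 p) {R : ℝ} (hR : 0 ≤ R) :
    Integrable (excess R) p := by
  refine (integrable_abs_of_memPr hp).mono'
    ((lipschitz_excess R).continuous).aestronglyMeasurable ?_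
  filter_upwards with x
  rw [Real.norm_eq_abs, abs_of_nonneg (excess_nonneg _ _)]
  exact excess_le_abs hR x

lemma tendsto_integral_excess {p : Measure ℝ} (hp : MemPr 1 p) :
    Tendsto (fun n : ℕ => ∫ x, excess n x ∂p) atTop (𝓝 0) := by
  haveI := hp.1
  have h0 : (0:ℝ) = ∫ x : ℝ, (0:ℝ) ∂p := by simp
  rw [h0]
  refine tendsto_integral_of_dominated_convergence (fun x => |x|)
    (fun n => ((lipschitz_excess _).continuous).aestronglyMeasurable)
    (integrable_abs_of_memPr hp) ?_ ?_
  · intro n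
    filter_upwards with x
    rw [Real.norm_eq_abs, abs_of_nonneg (excess_nonneg _ _)]
    exact excess_le_abs (Nat.cast_nonneg n) x
  · filter_upwards with x
    have : ∀ᶠ n : ℕ in atTop, excess n x = 0 := by
      filter_upwards [eventually_ge_atTop ⌈|x|⌉₊] with n hn
      have : |x| ≤ n := le_trans (Nat.le_ceil _) (by exact_mod_cast hn)
      rw [excess, max_eq_right]; linarith
    exact Tendsto.congr' (by filter_upwards [this] with n hn using hn.symm) tendsto_const_nhds

/-! ### Marginal transfer lemmas -/

lemma integrable_comp_fst {π : Measure (ℝ × ℝ)} {μ : Measure ℝ} (hfst : π.map Prod.fst = μ)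
    {f : ℝ → ℝ} (hf : Continuous f) (hint : Integrable f μ) :
    Integrable (fun z : ℝ × ℝ => f z.1) π := by
  rw [← hfst] at hint
  exact (integrable_map_measure hf.aestronglyMeasurable measurable_fst.aemeasurable).mp hint

lemma integrable_comp_snd {π : Measure (ℝ × ℝ)} {ν : Measure ℝ} (hsnd : π.map Prod.snd = ν)
    {f : ℝ → ℝ} (hf : Continuous f) (hint : Integrable f ν) :
    Integrable (fun z : ℝ × ℝ => f z.2) π := by
  rw [← hsnd] at hint
  exact (integrable_map_measure hf.aestronglyMeasurable measurable_snd.aemeasurable).mp hint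

lemma integral_comp_fst {π : Measure (ℝ × ℝ)} {μ : Measure ℝ} (hfst : π.map Prod.fst = μ)
    {f : ℝ → ℝ} (hf : Continuous f) :
    ∫ z : ℝ × ℝ, f z.1 ∂π = ∫ x, f x ∂μ := by
  rw [← hfst]
  exact (integral_map measurable_fst.aemeasurable hf.aestronglyMeasurable).symm

lemma integral_comp_snd {π : Measure (ℝ × ℝ)} {ν : Measure ℝ} (hsnd : π.map Prod.snd = ν)
    {f : ℝ → ℝ} (hf : Continuous f) :
    ∫ z : ℝ × ℝ, f z.2 ∂π = ∫ y, f y ∂ν := by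
  rw [← hsnd]
  exact (integral_map measurable_snd.aemeasurable hf.aestronglyMeasurable).symm

lemma integrable_gmul {π : Measure (ℝ × ℝ)} [IsProbabilityMeasure π] {μ ν : Measure ℝ}
    (hfst : π.map Prod.fst = μ) (hsnd : π.map Prod.snd = ν)
    (hμ : MemPr 1 μ) (hν : MemPr 1 ν)
    {g : ℝ → ℝ} (hg : Continuous g) {C : ℝ} (hgC : ∀ x, |g x| ≤ C) :
    Integrable (fun z : ℝ × ℝ => g z.1 * (z.2 - z.1)) π := by
  have habs1 := integrable_comp_fst hfst continuous_abs (integrable_abs_of_memPr hμ)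
  have habs2 := integrable_comp_snd hsnd continuous_abs (integrable_abs_of_memPr hν)
  refine (((habs1.add habs2)).const_mul C).mono'
    ((hg.comp continuous_fst).mul (continuous_snd.sub continuous_fst)).aestronglyMeasurable ?_
  filter_upwards with z
  rw [Real.norm_eq_abs, abs_mul]
  have h1 : |z.2 - z.1| ≤ |z.1| + |z.2| := by
    calc |z.2 - z.1| ≤ |z.2| + |z.1| := abs_sub _ _
    _ = |z.1| + |z.2| := by ring
  have h2 : (0:ℝ) ≤ C := le_trans (abs_nonneg (g 0)) (hgC 0)
  exact mul_le_mul (hgC z.1) h1 (abs_nonneg _) h2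

lemma truncation_error {π : Measure (ℝ × ℝ)} [IsProbabilityMeasure π] {μ ν : Measure ℝ}
    (hfst : π.map Prod.fst = μ) (hsnd : π.map Prod.snd = ν)
    (hμ : MemPr 1 μ) (hν : MemPr 1 ν)
    {g : ℝ → ℝ} (hg : Continuous g) {C : ℝ} (hgC : ∀ x, |g x| ≤ C)
    {R : ℝ} (hR : 0 ≤ R) :
    |∫ z : ℝ × ℝ, g z.1 * (z.2 - z.1) ∂π - ∫ z : ℝ × ℝ, g z.1 * clampR R (z.2 - z.1) ∂π|
      ≤ C * (∫ x, excess (R/2) x ∂μ + ∫ y, excess (R/2) y ∂ν) := by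
  have hC : (0:ℝ) ≤ C := le_trans (abs_nonneg (g 0)) (hgC 0)
  have hR2 : (0:ℝ) ≤ R / 2 := by linarith
  have hint1 := integrable_gmul hfst hsnd hμ hν hg hgC
  have hclampc : Continuous (fun z : ℝ × ℝ => g z.1 * clampR R (z.2 - z.1)) :=
    (hg.comp continuous_fst).mul ((continuous_clampR R).comp (continuous_snd.sub continuous_fst))
  have hint2 : Integrable (fun z : ℝ × ℝ => g z.1 * clampR R (z.2 - z.1)) π := by
    refine (integrable_const (C * R)).mono' hclampc.aestronglyMeasurable ?_
    filter_upwards with z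
    rw [Real.norm_eq_abs, abs_mul]
    exact mul_le_mul (hgC z.1) (abs_clampR_le hR _) (abs_nonneg _) hC
  have hexc1 := integrable_comp_fst hfst (lipschitz_excess (R/2)).continuous
    (integrable_excess hμ hR2)
  have hexc2 := integrable_comp_snd hsnd (lipschitz_excess (R/2)).continuous
    (integrable_excess hν hR2)
  rw [← integral_sub hint1 hint2]
  have step1 : |∫ z : ℝ × ℝ, (g z.1 * (z.2 - z.1) - g z.1 * clampR R (z.2 - z.1)) ∂π|
      ≤ ∫ z : ℝ × ℝ, |g z.1 * (z.2 - z.1) - g z.1 * clampR R (z.2 - z.1)| ∂π := by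
    simpa [Real.norm_eq_abs] using norm_integral_le_integral_norm (μ := π)
      (fun z : ℝ × ℝ => g z.1 * (z.2 - z.1) - g z.1 * clampR R (z.2 - z.1))
  have step2 : ∫ z : ℝ × ℝ, |g z.1 * (z.2 - z.1) - g z.1 * clampR R (z.2 - z.1)| ∂π
      ≤ ∫ z : ℝ × ℝ, C * (excess (R/2) z.1 + excess (R/2) z.2) ∂π := by
    refine integral_mono (hint1.sub hint2).abs ((hexc1.add hexc2).const_mul C) (fun z => ?_)
    rw [← mul_sub, abs_mul]
    calc |g z.1| * |(z.2 - z.1) - clampR R (z.2 - z.1)|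
        ≤ C * excess R (z.2 - z.1) :=
      mul_le_mul (hgC z.1) (abs_sub_clampR hR _) (abs_nonneg _) hC
    _ ≤ C * (excess (R/2) z.1 + excess (R/2) z.2) :=
      mul_le_mul_of_nonneg_left (excess_sub_le R z.1 z.2) hC
  have step3 : ∫ z : ℝ × ℝ, C * (excess (R/2) z.1 + excess (R/2) z.2) ∂π
      = C * (∫ x, excess (R/2) x ∂μ + ∫ y, excess (R/2) y ∂ν) := by
    rw [integral_const_mul, integral_add hexc1 hexc2,
      integral_comp_fst hfst (lipschitz_excess (R/2)).continuous,
      integral_comp_snd hsnd (lipschitz_excess (R/2)).continuous]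
  linarith

lemma mart_integral_zero {μ ν : Measure ℝ} (hμ : MemPr 1 μ) (hν : MemPr 1 ν)
    (K : Kernel ℝ ℝ) [IsMarkovKernel K]
    (hsnd : (μ ⊗ₘ K).map Prod.snd = ν)
    (hbary : ∀ᵐ x ∂μ, ∫ y, y ∂(K x) = x)
    {g : ℝ → ℝ} (hg : Continuous g) {C : ℝ} (hgC : ∀ x, |g x| ≤ C) :
    ∫ z : ℝ × ℝ, g z.1 * (z.2 - z.1) ∂(μ ⊗ₘ K) = 0 := by
  haveI := hμ.1
  have hfst : (μ ⊗ₘ K).map Prod.fst = μ := by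
    rw [show (μ ⊗ₘ K).map Prod.fst = (μ ⊗ₘ K).fst from rfl, Measure.fst_compProd]
  haveI : IsProbabilityMeasure (μ ⊗ₘ K) := by infer_instance
  have hint1 := integrable_gmul hfst hsnd hμ hν hg hgC
  have habs1 := integrable_comp_fst hfst continuous_abs (integrable_abs_of_memPr hμ)
  have habs2 := integrable_comp_snd hsnd continuous_abs (integrable_abs_of_memPr hν)
  have hH : Integrable (fun z : ℝ × ℝ => z.2 - z.1) (μ ⊗ₘ K) := by
    refine (habs1.add habs2).mono'
      (continuous_snd.sub continuous_fst).aestronglyMeasurable ?_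
    filter_upwards with z
    rw [Real.norm_eq_abs]
    calc |z.2 - z.1| ≤ |z.2| + |z.1| := abs_sub _ _
    _ = |z.1| + |z.2| := by ring
  have hsec : ∀ᵐ x ∂μ, Integrable (fun y => y - x) (K x) := by
    have := (Measure.integrable_compProd_iff
      (f := fun z : ℝ × ℝ => z.2 - z.1)
      (continuous_snd.sub continuous_fst).aestronglyMeasurable).mp hH
    exact this.1
  rw [Measure.integral_compProd hint1]
  have hae : ∀ᵐ x ∂μ, ∫ y, g x * (y - x) ∂(K x) = 0 := by
    filter_upwards [hsec, hbary] with x hx hb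
    rw [MeasureTheory.integral_const_mul]
    have hid : Integrable (fun y : ℝ => y) (K x) := by
      have := hx.add (integrable_const x)
      refine this.congr (by filter_upwards with y; simp)
    rw [integral_sub hid (integrable_const x), integral_const]
    simp [hb]
  calc ∫ x, ∫ y, g x * (y - x) ∂(K x) ∂μ = ∫ x, (0:ℝ) ∂μ := integral_congr_ae hae
  _ = 0 := integral_zero _ _

/-- **The martingale property passes to the limit**: if `π_k ∈ Π_M(μ_k,ν_k)` with
`μ_k → μ`, `ν_k → ν` in `W₁` and `π_k → π` weakly, then `π ∈ Π_M(μ,ν)`. -/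
theorem martingale_property_limit
    (μk νk : ℕ → Measure ℝ) (μ ν : Measure ℝ)
    (hμk : ∀ k, MemPr 1 (μk k)) (hνk : ∀ k, MemPr 1 (νk k))
    (hμ : MemPr 1 μ) (hν : MemPr 1 ν)
    (hconvμ : TendstoWr 1 μk μ) (hconvν : TendstoWr 1 νk ν)
    (πk : ℕ → Measure (ℝ × ℝ))
    (hπk : ∀ k, IsMartCoupling (μk k) (νk k) (πk k))
    (π : Measure (ℝ × ℝ)) (hπ : IsProbabilityMeasure π)
    (hweak : ∀ f : BoundedContinuousFunction (ℝ × ℝ) ℝ,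
      Tendsto (fun k => ∫ z, f z ∂(πk k)) atTop (nhds (∫ z, f z ∂π))) :
    IsMartCoupling μ ν π := by
  haveI := hμ.1; haveI := hν.1; haveI := hπ
  choose κs hκm hκp hbind hsndk hbaryk using hπk
  let Kk : ℕ → Kernel ℝ ℝ := fun k => ⟨κs k, hκm k⟩
  haveI hKmk : ∀ k, IsMarkovKernel (Kk k) := fun k => ⟨hκp k⟩
  have hcomp : ∀ k, πk k = μk k ⊗ₘ Kk k := by
    intro k
    haveI := (hμk k).1
    rw [hbind k, compProd_eq_bind]
    rfl
  have hfstk : ∀ k, (πk k).map Prod.fst = μk k := by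
    intro k
    haveI := (hμk k).1
    rw [hcomp k, show (μk k ⊗ₘ Kk k).map Prod.fst = (μk k ⊗ₘ Kk k).fst from rfl,
      Measure.fst_compProd]
  -- weak convergence against explicit bounded continuous functions
  have hweak' : ∀ (G : ℝ × ℝ → ℝ), Continuous G → ∀ (C : ℝ), (∀ z, |G z| ≤ C) →
      Tendsto (fun k => ∫ z, G z ∂(πk k)) atTop (𝓝 (∫ z, G z ∂π)) := by
    intro G hGc C hGC
    have := hweak (BoundedContinuousFunction.ofNormedAddCommGroup G hGc C
      (by simpa [Real.norm_eq_abs] using hGC))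
    simpa using this
  -- convergence of Lipschitz test integrals from W1 convergence
  have hW1test : ∀ (pk : ℕ → Measure ℝ) (p : Measure ℝ), (∀ k, MemPr 1 (pk k)) → MemPr 1 p →
      TendstoWr 1 pk p → ∀ (L : ℝ≥0) (f : ℝ → ℝ), LipschitzWith L f →
      Tendsto (fun k => ∫ x, f x ∂(pk k)) atTop (𝓝 (∫ x, f x ∂p)) := by
    intro pk p hpk hp hconv L f hf
    have h1 : ∀ k, ‖∫ x, f x ∂(pk k) - ∫ x, f x ∂p‖ ≤ (L:ℝ) * WrPow 1 (pk k) p := by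
      intro k
      simpa [Real.norm_eq_abs] using abs_integral_sub_le_W1 (hpk k) hp hf
    have h2 : Tendsto (fun k => (L:ℝ) * WrPow 1 (pk k) p) atTop (𝓝 0) := by
      simpa using hconv.const_mul (L:ℝ)
    have h3 := squeeze_zero_norm h1 h2
    have h4 := h3.add_const (∫ x, f x ∂p)
    simpa using h4
  -- marginal identification
  have hfstπ : π.map Prod.fst = μ := by
    haveI : IsProbabilityMeasure (π.map Prod.fst) :=
      Measure.isProbabilityMeasure_map measurable_fst.aemeasurable
    refine ext_of_lipschitz_tests (fun L f hf hicc => ?_)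
    have hA := hW1test μk μ hμk hμ hconvμ L f hf
    have hB : Tendsto (fun k => ∫ z : ℝ × ℝ, f z.1 ∂(πk k)) atTop
        (𝓝 (∫ z : ℝ × ℝ, f z.1 ∂π)) := by
      refine hweak' (fun z => f z.1) (hf.continuous.comp continuous_fst) 1 (fun z => ?_)
      rcases hicc z.1 with ⟨h0, h1⟩
      rw [abs_le]; constructor <;> linarith
    have heqk : (fun k => ∫ z : ℝ × ℝ, f z.1 ∂(πk k)) = (fun k => ∫ x, f x ∂(μk k)) := by
      funext k
      exact integral_comp_fst (hfstk k) hf.continuous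
    rw [heqk] at hB
    have := tendsto_nhds_unique hB hA
    rw [← this]
    exact (integral_comp_fst rfl hf.continuous).symm
  have hsndπ : π.map Prod.snd = ν := by
    haveI : IsProbabilityMeasure (π.map Prod.snd) :=
      Measure.isProbabilityMeasure_map measurable_snd.aemeasurable
    refine ext_of_lipschitz_tests (fun L f hf hicc => ?_)
    have hA := hW1test νk ν hνk hν hconvν L f hf
    have hB : Tendsto (fun k => ∫ z : ℝ × ℝ, f z.2 ∂(πk k)) atTop
        (𝓝 (∫ z : ℝ × ℝ, f z.2 ∂π)) := by
      refine hweak' (fun z => f z.2) (hf.continuous.comp continuous_snd) 1 (fun z => ?_)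
      rcases hicc z.2 with ⟨h0, h1⟩
      rw [abs_le]; constructor <;> linarith
    have heqk : (fun k => ∫ z : ℝ × ℝ, f z.2 ∂(πk k)) = (fun k => ∫ y, f y ∂(νk k)) := by
      funext k
      exact integral_comp_snd (hsndk k) hf.continuous
    rw [heqk] at hB
    have := tendsto_nhds_unique hB hA
    rw [← this]
    exact (integral_comp_snd rfl hf.continuous).symm
  -- the key vanishing property for the limit
  have hzero : ∀ (g : ℝ → ℝ), Continuous g → ∀ (C : ℝ), (∀ x, |g x| ≤ C) →
      ∫ z : ℝ × ℝ, g z.1 * (z.2 - z.1) ∂π = 0 := by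
    intro g hgc C hgC
    set D := max C 1 with hD
    have hD1 : (1:ℝ) ≤ D := le_max_right _ _
    have hD0 : (0:ℝ) < D := by linarith
    have hgD : ∀ x, |g x| ≤ D := fun x => (hgC x).trans (le_max_left _ _)
    have habs : ∀ ε > (0:ℝ), |∫ z : ℝ × ℝ, g z.1 * (z.2 - z.1) ∂π| ≤ ε := by
      intro ε hε
      -- choose truncation level
      have hEsum : Tendsto (fun n : ℕ => ∫ x, excess n x ∂μ + ∫ y, excess n y ∂ν)
          atTop (𝓝 0) := by
        simpa using (tendsto_integral_excess hμ).add (tendsto_integral_excess hν)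
      have hEev : ∀ᶠ n : ℕ in atTop,
          ∫ x, excess n x ∂μ + ∫ y, excess n y ∂ν < ε / (4 * D) :=
        hEsum.eventually_lt_const (by positivity)
      obtain ⟨n, hn⟩ := hEev.exists
      set R : ℝ := 2 * (n : ℝ) with hRdef
      have hR : (0:ℝ) ≤ R := by positivity
      have hR2 : R / 2 = (n : ℝ) := by rw [hRdef]; ring
      set G : ℝ × ℝ → ℝ := fun z => g z.1 * clampR R (z.2 - z.1) with hG
      have hGc : Continuous G :=
        (hgc.comp continuous_fst).mul
          ((continuous_clampR R).comp (continuous_snd.sub continuous_fst))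
      have hGbd : ∀ z, |G z| ≤ D * R := by
        intro z
        rw [hG, abs_mul]
        exact mul_le_mul (hgD z.1) (abs_clampR_le hR _) (abs_nonneg _) (le_of_lt hD0)
      -- the truncated integrals for πk are eventually small
      have hsmall : ∀ᶠ k in atTop, |∫ z, G z ∂(πk k)| ≤ ε / 2 := by
        have hμev : ∀ᶠ k in atTop, WrPow 1 (μk k) μ < ε / (8 * D) :=
          hconvμ.eventually_lt_const (by positivity)
        have hνev : ∀ᶠ k in atTop, WrPow 1 (νk k) ν < ε / (8 * D) :=
          hconvν.eventually_lt_const (by positivity)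
        filter_upwards [hμev, hνev] with k hkμ hkν
        haveI := (hμk k).1
        have hz : ∫ z : ℝ × ℝ, g z.1 * (z.2 - z.1) ∂(πk k) = 0 := by
          rw [hcomp k]
          refine mart_integral_zero (hμk k) (hνk k) (Kk k) ?_ (hbaryk k) hgc hgD
          rw [← hcomp k]; exact hsndk k
        haveI : IsProbabilityMeasure (πk k) := by
          rw [hcomp k]; infer_instance
        have htr := truncation_error (hfstk k) (hsndk k) (hμk k) (hνk k) hgc hgD hR
        rw [hz, hR2] at htr
        -- bound the k-tails by the limit tails plus W1 distances
        have hbμ : ∫ x, excess n x ∂(μk k) ≤ WrPow 1 (μk k) μ + ∫ x, excess n x ∂μ := by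
          have := abs_integral_sub_le_W1 (hμk k) hμ (lipschitz_excess (n:ℝ))
          rw [NNReal.coe_one, one_mul] at this
          have := abs_le.mp this
          linarith [this.2]
        have hbν : ∫ y, excess n y ∂(νk k) ≤ WrPow 1 (νk k) ν + ∫ y, excess n y ∂ν := by
          have := abs_integral_sub_le_W1 (hνk k) hν (lipschitz_excess (n:ℝ))
          rw [NNReal.coe_one, one_mul] at this
          have := abs_le.mp this
          linarith [this.2]
        have hDmul : D * (∫ x, excess n x ∂(μk k) + ∫ y, excess n y ∂(νk k))
            ≤ D * (ε / (8 * D) + ε / (8 * D) + ε / (4 * D)) := by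
          refine mul_le_mul_of_nonneg_left ?_ (le_of_lt hD0)
          linarith
        have hfield : D * (ε / (8 * D) + ε / (8 * D) + ε / (4 * D)) = ε / 2 := by
          field_simp
          ring
        calc |∫ z, G z ∂(πk k)| = |0 - ∫ z, G z ∂(πk k)| := by rw [zero_sub, abs_neg]
        _ ≤ D * (∫ x, excess n x ∂(μk k) + ∫ y, excess n y ∂(νk k)) := htr
        _ ≤ ε / 2 := by rw [← hfield]; exact hDmul
      -- pass to the limit
      have hGlim := (hweak' G hGc (D * R) hGbd).abs
      have hGπ : |∫ z, G z ∂π| ≤ ε / 2 := le_of_tendsto hGlim hsmall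
      have htrπ := truncation_error hfstπ hsndπ hμ hν hgc hgD hR
      rw [hR2] at htrπ
      have hDtail : D * (∫ x, excess n x ∂μ + ∫ y, excess n y ∂ν) ≤ ε / 4 := by
        have h1 : D * (∫ x, excess n x ∂μ + ∫ y, excess n y ∂ν) ≤ D * (ε / (4 * D)) :=
          mul_le_mul_of_nonneg_left (le_of_lt hn) (le_of_lt hD0)
        have h2 : D * (ε / (4 * D)) = ε / 4 := by field_simp
        linarith
      calc |∫ z : ℝ × ℝ, g z.1 * (z.2 - z.1) ∂π|
          ≤ |∫ z : ℝ × ℝ, g z.1 * (z.2 - z.1) ∂π - ∫ z, G z ∂π| + |∫ z, G z ∂π| := by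
            have := abs_sub_abs_le_abs_sub (∫ z : ℝ × ℝ, g z.1 * (z.2 - z.1) ∂π)
              (∫ z, G z ∂π)
            have h := abs_add_le (∫ z : ℝ × ℝ, g z.1 * (z.2 - z.1) ∂π - ∫ z, G z ∂π)
              (∫ z, G z ∂π)
            simpa using h
      _ ≤ ε / 4 + ε / 2 := add_le_add (le_trans htrπ hDtail) hGπ
      _ ≤ ε := by linarith
    have : |∫ z : ℝ × ℝ, g z.1 * (z.2 - z.1) ∂π| ≤ 0 :=
      le_of_forall_pos_le_add (fun ε hε => by simpa using habs ε hε)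
    exact abs_nonpos_iff.mp this
  -- disintegration of the limit
  have hfst' : π.fst = μ := hfstπ
  have hπeq : π = μ ⊗ₘ π.condKernel := by
    conv_lhs => rw [← π.disintegrate π.condKernel]
    rw [hfst']
  -- barycenter of the limit kernel
  have hH : Integrable (fun z : ℝ × ℝ => z.2 - z.1) π := by
    have habs1 := integrable_comp_fst hfstπ continuous_abs (integrable_abs_of_memPr hμ)
    have habs2 := integrable_comp_snd hsndπ continuous_abs (integrable_abs_of_memPr hν)
    refine (habs1.add habs2).mono'
      (continuous_snd.sub continuous_fst).aestronglyMeasurable ?_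
    filter_upwards with z
    rw [Real.norm_eq_abs]
    calc |z.2 - z.1| ≤ |z.2| + |z.1| := abs_sub _ _
    _ = |z.1| + |z.2| := by ring
  have hHc : Integrable (fun z : ℝ × ℝ => z.2 - z.1) (μ ⊗ₘ π.condKernel) := by
    rw [← hπeq]; exact hH
  obtain ⟨hsec, hnorm⟩ := (Measure.integrable_compProd_iff
    (continuous_snd.sub continuous_fst).aestronglyMeasurable).mp hHc
  set bar : ℝ → ℝ := fun x => ∫ y, y ∂(π.condKernel x) with hbar
  have hbarm : StronglyMeasurable bar := by
    have hsm : StronglyMeasurable (fun z : ℝ × ℝ => z.2) := measurable_snd.stronglyMeasurable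
    have h2 : StronglyMeasurable (fun x : ℝ => ∫ y : ℝ, (x, y).2 ∂(π.condKernel x)) :=
      hsm.integral_kernel_prod_right'
    simpa using h2
  have hfm : AEStronglyMeasurable (fun x => bar x - x) μ :=
    (hbarm.sub stronglyMeasurable_id).aestronglyMeasurable
  have hfint : Integrable (fun x => bar x - x) μ := by
    refine hnorm.mono' hfm ?_
    filter_upwards [hsec] with x hx
    have hid : Integrable (fun y : ℝ => y) (π.condKernel x) := by
      have := hx.add (integrable_const x)
      refine this.congr (by filter_upwards with y; simp)
    have : bar x - x = ∫ y, (y - x) ∂(π.condKernel x) := by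
      rw [integral_sub hid (integrable_const x), integral_const]
      simp [hbar]
    rw [this]
    calc ‖∫ y, (y - x) ∂(π.condKernel x)‖ ≤ ∫ y, ‖y - x‖ ∂(π.condKernel x) :=
      norm_integral_le_integral_norm _
    _ = ∫ y, ‖(x, y).2 - (x, y).1‖ ∂(π.condKernel x) := rfl
  have hker : ∀ᵐ x ∂μ, bar x = x := by
    have hsmul : ∀ (g : ℝ → ℝ), ContDiff ℝ ∞ g → HasCompactSupport g →
        ∫ x, g x • (bar x - x) ∂μ = 0 := by
      intro g hg1 hg2
      have hgc := hg1.continuous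
      obtain ⟨C, hgC⟩ := hgc.bounded_above_of_compact_support hg2
      have hgC' : ∀ x, |g x| ≤ C := by
        intro x; have := hgC x; rwa [Real.norm_eq_abs] at this
      have h0 := hzero g hgc C hgC'
      have hint1 : Integrable (fun z : ℝ × ℝ => g z.1 * (z.2 - z.1)) π :=
        integrable_gmul hfstπ hsndπ hμ hν hgc hgC'
      rw [hπeq] at h0 hint1
      rw [Measure.integral_compProd hint1] at h0
      rw [← h0]
      refine integral_congr_ae ?_
      filter_upwards [hsec] with x hx
      have hid : Integrable (fun y : ℝ => y) (π.condKernel x) := by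
        have := hx.add (integrable_const x)
        refine this.congr (by filter_upwards with y; simp)
      rw [smul_eq_mul, MeasureTheory.integral_const_mul,
        integral_sub hid (integrable_const x), integral_const]
      simp [hbar]
    have := ae_eq_zero_of_integral_contDiff_smul_eq_zero
      (hfint.locallyIntegrable) hsmul
    filter_upwards [this] with x hx
    have : bar x - x = 0 := hx
    linarith
  exact ⟨fun x => π.condKernel x, π.condKernel.measurable, fun x => inferInstance,
    hπeq.trans (compProd_eq_bind μ π.condKernel), hsndπ, hker⟩
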